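/- Let (X, d) be a compact metric space, ε > 0, (E_i)_{i∈I} a finite or countable family of subsets of X each of diameter less than ε, and (c_i)_{i∈I} a family of positive real numbers. Let t > 0 and suppose F ⊆ X satisfies F ⊆ {x ∈ X : Σ_i c_i χ_{E_i}(x) > t}. Then F can be covered by at most (1/t) Σ_i c_i balls with centers in ∪_i E_i and radius 6ε. -/

import Mathlib

open Set Metric
open scoped ENNReal

/-- Lemma 3.4 (covering lemma): let `(X,d)` be a compact metric space, `ε > 0`,
`(E_i)_{i∈I}` a finite or countable family of subsets of `X` of diameter less than `ε`, and
`(c_i)` positive numbers.  If `t > 0` and `F ⊆ {x : Σ_i c_i χ_{E_i}(x) > t}`, then `F` can be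
covered by no more than `(1/t) Σ_i c_i` balls with centers in `⋃_i E_i` and radius `6ε`. -/
theorem stmt2 {X : Type*} [MetricSpace X] [CompactSpace X] {ι : Type*} [Countable ι]
    (ε : ℝ) (hε : 0 < ε) (E : ι → Set X)
    (hE : ∀ i, EMetric.diam (E i) < ENNReal.ofReal ε)
    (c : ι → ℝ) (hc : ∀ i, 0 < c i) (t : ℝ) (ht : 0 < t) (F : Set X)
    (hF : F ⊆ {x | ENNReal.ofReal t <
      ∑' i, (E i).indicator (fun _ => ENNReal.ofReal (c i)) x}) :
    ∃ S : Finset X, (↑S : Set X) ⊆ (⋃ i, E i) ∧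
      F ⊆ ⋃ y ∈ S, Metric.ball y (6 * ε) ∧
      (S.card : ℝ≥0∞) ≤ ENNReal.ofReal t⁻¹ * ∑' i, ENNReal.ofReal (c i) := by
  classical
  -- every point of F lies in some E i
  have hFE : F ⊆ ⋃ i, E i := by
    intro x hx
    by_contra hxE
    simp only [mem_iUnion, not_exists] at hxE
    have h := hF hx
    simp only [mem_setOf_eq] at h
    have h0 : ∑' i, (E i).indicator (fun _ => ENNReal.ofReal (c i)) x = 0 := by
      rw [ENNReal.tsum_eq_zero]
      exact fun i => Set.indicator_of_notMem (hxE i) _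
    rw [h0] at h
    exact absurd h (not_lt.2 zero_le)
  -- finite cover of X by ε/3-balls
  obtain ⟨T, hTsub, hTfin, hTcov⟩ :=
    finite_cover_balls_of_compact (isCompact_univ (X := X))
      (show (0:ℝ) < ε / 3 by linarith)
  set N := hTfin.toFinset.card with hN
  -- any ε-separated finset has at most N elements
  have hcard_le : ∀ S : Finset X,
      (∀ s ∈ S, ∀ s' ∈ S, s ≠ s' → ε ≤ dist s s') → S.card ≤ N := by
    intro S hsep
    have hmem : ∀ s : X, ∃ y ∈ T, s ∈ ball y (ε / 3) := by
      intro s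
      have := hTcov (mem_univ s)
      simpa using this
    choose g hgT hgball using hmem
    apply Finset.card_le_card_of_injOn g
    · intro s hs
      simpa using hgT s
    · intro a ha b hb hab
      by_contra hne
      have h1 : dist a (g a) < ε / 3 := hgball a
      have h2 : dist b (g b) < ε / 3 := hgball b
      have : dist a b < ε := by
        calc dist a b ≤ dist a (g a) + dist (g b) b := by
              rw [hab]; exact dist_triangle _ _ _
          _ < ε / 3 + ε / 3 := by rw [dist_comm (g b) b]; linarith
          _ < ε := by linarith
      exact absurd this (not_lt.2 (hsep a (Finset.mem_coe.1 ha) b (Finset.mem_coe.1 hb) hne))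
  -- take a maximal-cardinality ε-separated subset of F
  set P : ℕ → Prop := fun n => ∃ S : Finset X, (↑S : Set X) ⊆ F ∧
      (∀ s ∈ S, ∀ s' ∈ S, s ≠ s' → ε ≤ dist s s') ∧ S.card = n with hP
  have hne : {n | P n}.Nonempty := ⟨0, ∅, by simp, by simp, rfl⟩
  have hbdd : BddAbove {n | P n} := by
    refine ⟨N, fun n hn => ?_⟩
    obtain ⟨S, _, hsep, hcard⟩ := hn
    exact hcard ▸ hcard_le S hsep
  obtain ⟨S, hSF, hSsep, hScard⟩ : P (sSup {n | P n}) := Nat.sSup_mem hne hbdd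
  refine ⟨S, ?_, ?_, ?_⟩
  · exact (Finset.coe_subset.2 (le_refl S)).trans (hSF.trans hFE)
  · -- covering by maximality
    intro x hx
    by_contra hxcov
    simp only [mem_iUnion, not_exists, Metric.mem_ball, not_lt] at hxcov
    have hxsep : ∀ s ∈ S, ε ≤ dist x s := by
      intro s hs
      have := hxcov s hs
      linarith
    have hxS : x ∉ S := by
      intro hxS
      have := hxsep x hxS
      simp at this; linarith
    have hP' : P (S.card + 1) := by
      refine ⟨insert x S, ?_, ?_, ?_⟩
      · intro y hy
        rcases Finset.mem_insert.1 (by exact_mod_cast hy) with h | h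
        · exact h ▸ hx
        · exact hSF (Finset.mem_coe.2 h)
      · intro a ha b hb hab
        rcases Finset.mem_insert.1 ha with ha' | ha' <;>
          rcases Finset.mem_insert.1 hb with hb' | hb'
        · exact absurd (ha'.trans hb'.symm) hab
        · exact ha' ▸ hxsep b hb'
        · rw [dist_comm]; exact hb' ▸ hxsep a ha'
        · exact hSsep a ha' b hb' hab
      · rw [Finset.card_insert_of_notMem hxS, hScard]
    have : S.card + 1 ≤ sSup {n | P n} := le_csSup hbdd hP'
    rw [hScard] at this
    omega
  · -- cardinality bound
    have key : (S.card : ℝ≥0∞) * ENNReal.ofReal t ≤ ∑' i, ENNReal.ofReal (c i) := by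
      calc (S.card : ℝ≥0∞) * ENNReal.ofReal t
          = ∑ _s ∈ S, ENNReal.ofReal t := by
            rw [Finset.sum_const, nsmul_eq_mul]
        _ ≤ ∑ s ∈ S, ∑' i, (E i).indicator (fun _ => ENNReal.ofReal (c i)) s :=
            Finset.sum_le_sum fun s hs => (hF (hSF (Finset.mem_coe.2 hs))).le
        _ = ∑' i, ∑ s ∈ S, (E i).indicator (fun _ => ENNReal.ofReal (c i)) s :=
            (Summable.tsum_finsetSum fun s _ => ENNReal.summable).symm
        _ ≤ ∑' i, ENNReal.ofReal (c i) := by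
            refine ENNReal.tsum_le_tsum fun i => ?_
            have hfilter : (S.filter (· ∈ E i)).card ≤ 1 := by
              rw [Finset.card_le_one]
              intro a ha b hb
              rw [Finset.mem_filter] at ha hb
              by_contra hab
              have hd : edist a b < ENNReal.ofReal ε :=
                lt_of_le_of_lt (EMetric.edist_le_diam_of_mem ha.2 hb.2) (hE i)
              rw [edist_lt_ofReal] at hd
              exact absurd hd (not_lt.2 (hSsep a ha.1 b hb.1 hab))
            calc ∑ s ∈ S, (E i).indicator (fun _ => ENNReal.ofReal (c i)) s
                = ∑ s ∈ S.filter (· ∈ E i), ENNReal.ofReal (c i) := by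
                  rw [Finset.sum_indicator_eq_sum_filter]
              _ = (S.filter (· ∈ E i)).card • ENNReal.ofReal (c i) := by
                  rw [Finset.sum_const]
              _ ≤ 1 • ENNReal.ofReal (c i) := by
                  exact nsmul_le_nsmul_left zero_le hfilter
              _ = ENNReal.ofReal (c i) := one_nsmul _
    rw [ENNReal.ofReal_inv_of_pos ht, mul_comm, ← div_eq_mul_inv,
      ENNReal.le_div_iff_mul_le (Or.inl (by simp [ht])) (Or.inl ENNReal.ofReal_ne_top)]
    exact key
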